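/- arXiv:1812.02993 — 2 statements merged into one kernel-verified Lean document; each statement's English description precedes it below -/
import Mathlib

section
/- If a dynamic mechanism is dynamic incentive compatible (DIC), then for every buyer i and every fixed profile of truthful reports by the other buyers, truthful reporting in every period maximizes buyer i's expected total utility E[Σ_{t=1}^T u_i^t] among all adaptive reporting strategies of buyer i, i.e., among all families of maps σ_i^t sending buyer i's observed history of past true values and past reports together with the current true value v_i^t to a report in V_i^t. -/
open Finset

namespace DynAuction

/-- A full matrix of (reported or true) values: one value per period and buyer. -/
abbrev Val (k T : ℕ) := Fin T → Fin k → ℝ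

/-- A setting: finite nonnegative value spaces and full-support pmfs,
independent across buyers and periods. -/
structure Setting (k T : ℕ) where
  V : Fin k → Fin T → Finset ℝ
  V_nonempty : ∀ i t, (V i t).Nonempty
  V_nonneg : ∀ i t, ∀ s ∈ V i t, (0 : ℝ) ≤ s
  f : Fin k → Fin T → ℝ → ℝ
  f_pos : ∀ i t, ∀ s ∈ V i t, 0 < f i t s
  f_sum : ∀ i t, ∑ s ∈ V i t, f i t s = 1

variable {k T : ℕ}

/-- A per-period map (allocation or payment) from report histories. -/
abbrev Mech (k T : ℕ) := Fin T → Val k T → Fin k → ℝ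

/-- A per-period map depends only on the reports up to the given period. -/
def PrefixDep (m : Mech k T) : Prop :=
  ∀ (t : Fin T) (h h' : Val k T), (∀ τ : Fin T, τ ≤ t → h τ = h' τ) → m t h = m t h'

def ValidSeq (S : Setting k T) (v : Val k T) : Prop := ∀ t i, v t i ∈ S.V i t

/-- The finite set of all (valid) value matrices. -/
noncomputable def allSeq (S : Setting k T) : Finset (Val k T) :=
  Fintype.piFinset fun t => Fintype.piFinset fun i => S.V i t

/-- Probability of a full value matrix (independence across buyers and periods). -/
noncomputable def seqProb (S : Setting k T) (v : Val k T) : ℝ :=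
  ∏ t, ∏ i, S.f i t (v t i)

/-- The finite set of all value sequences of a single buyer. -/
noncomputable def buyerSeqs (S : Setting k T) (i : Fin k) : Finset (Fin T → ℝ) :=
  Fintype.piFinset fun t => S.V i t

/-- Probability of a single buyer's value sequence. -/
noncomputable def buyerProb (S : Setting k T) (i : Fin k) (w : Fin T → ℝ) : ℝ :=
  ∏ t, S.f i t (w t)

/-- Period-`t` utility of buyer `i` with true value `vi` under report history `h`. -/
def util (x p : Mech k T) (i : Fin k) (t : Fin T) (vi : ℝ) (h : Val k T) : ℝ :=
  vi * x t h i - p t h i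

/-- Replace buyer `i`'s report in period `t` by `r`. -/
def replace (vhat : Val k T) (i : Fin k) (t : Fin T) (r : ℝ) : Val k T :=
  fun τ j => if τ = t ∧ j = i then r else vhat τ j

/-- The report history where buyer `i` reports truthfully (values `w`) after period `t`,
while everything else is as in `vhat`. -/
def blend (i : Fin k) (t : Fin T) (vhat : Val k T) (w : Fin T → ℝ) : Val k T :=
  fun τ j => if t < τ ∧ j = i then w τ else vhat τ j

/-- Continuation utility of buyer `i` after period `t`: expected utility from periods
`τ > t` assuming buyer `i` reports truthfully from period `t+1` on while the other
buyers' reports are as given in `vhat`. -/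
noncomputable def contUtil (S : Setting k T) (x p : Mech k T) (i : Fin k) (t : Fin T)
    (vhat : Val k T) : ℝ :=
  ∑ w ∈ buyerSeqs S i, buyerProb S i w *
    ∑ τ ∈ univ.filter (fun τ : Fin T => t < τ), util x p i τ (w τ) (blend i t vhat w)

/-- Dynamic incentive compatibility. -/
def DIC (S : Setting k T) (x p : Mech k T) : Prop :=
  ∀ vhat : Val k T, ValidSeq S vhat → ∀ (i : Fin k) (t : Fin T),
    ∀ vi ∈ S.V i t, ∀ r ∈ S.V i t,
      util x p i t vi (replace vhat i t r) + contUtil S x p i t (replace vhat i t r)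
        ≤ util x p i t vi (replace vhat i t vi) + contUtil S x p i t (replace vhat i t vi)

/-- Ex-post individual rationality under truthful reporting. -/
def EPIR (S : Setting k T) (x p : Mech k T) : Prop :=
  ∀ v : Val k T, ValidSeq S v → ∀ i : Fin k, 0 ≤ ∑ t, util x p i t (v t i) v

/-- Expected revenue under truthful reporting. -/
noncomputable def revenue (S : Setting k T) (p : Mech k T) : ℝ :=
  ∑ v ∈ allSeq S, seqProb S v * ∑ t, ∑ i, p t v i

/-- Expected welfare under truthful reporting. -/
noncomputable def welfare (S : Setting k T) (x : Mech k T) : ℝ :=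
  ∑ v ∈ allSeq S, seqProb S v * ∑ t, ∑ i, v t i * x t v i

/-! ### Bank account mechanisms -/

/-- A per-period bank-account map: takes the current period's reports and a balance
vector, returns a vector (allocation, payment, or updated balances). -/
abbrev BankMap (k T : ℕ) := Fin T → (Fin k → ℝ) → (Fin k → ℝ) → Fin k → ℝ

def NonnegBal (b : Fin k → ℝ) : Prop := ∀ i, 0 ≤ b i

def BValid (S : Setting k T) (t : Fin T) (v : Fin k → ℝ) : Prop := ∀ j, v j ∈ S.V j t

/-- Allocation bounds and feasibility for the per-period auctions. -/
def BankFeasible (S : Setting k T) (xB : BankMap k T) : Prop :=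
  ∀ (t : Fin T) (v : Fin k → ℝ), BValid S t v → ∀ b : Fin k → ℝ, NonnegBal b →
    (∀ i, 0 ≤ xB t v b i ∧ xB t v b i ≤ 1) ∧ (∑ i, xB t v b i ≤ 1)

/-- (IC): each per-period auction is single-period incentive compatible for each balance. -/
def BankIC (S : Setting k T) (xB pB : BankMap k T) : Prop :=
  ∀ (t : Fin T) (b : Fin k → ℝ), NonnegBal b → ∀ v : Fin k → ℝ, BValid S t v →
    ∀ (i : Fin k), ∀ r ∈ S.V i t,
      v i * xB t (Function.update v i r) b i - pB t (Function.update v i r) b i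
        ≤ v i * xB t v b i - pB t v b i

/-- Expected stage utility of buyer `i` (expectation over buyer `i`'s own value). -/
noncomputable def stageEU (S : Setting k T) (xB pB : BankMap k T) (t : Fin T) (i : Fin k)
    (v : Fin k → ℝ) (b : Fin k → ℝ) : ℝ :=
  ∑ s ∈ S.V i t, S.f i t s *
    (s * xB t (Function.update v i s) b i - pB t (Function.update v i s) b i)

/-- (BI): the expected stage utility is nonnegative and balance independent. -/
def BankBI (S : Setting k T) (xB pB : BankMap k T) : Prop :=
  ∀ (t : Fin T) (i : Fin k) (v : Fin k → ℝ), (∀ j, j ≠ i → v j ∈ S.V j t) →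
    (∀ b b' : Fin k → ℝ, NonnegBal b → NonnegBal b' →
      stageEU S xB pB t i v b = stageEU S xB pB t i v b') ∧
    (∀ b : Fin k → ℝ, NonnegBal b → 0 ≤ stageEU S xB pB t i v b)

/-- (BU): balance update conditions. -/
def BankBU (S : Setting k T) (xB pB buB : BankMap k T) : Prop :=
  ∀ (t : Fin T) (b : Fin k → ℝ), NonnegBal b → ∀ v : Fin k → ℝ, BValid S t v →
    ∀ i : Fin k,
      0 ≤ buB t v b i ∧ buB t v b i ≤ b i + v i * xB t v b i - pB t v b i

/-- Balances induced recursively by the balance update policy: `balAux n` is the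
balance vector at the end of the first `n` periods (`balAux 0 = 0`). -/
noncomputable def balAux (buB : BankMap k T) (v : Val k T) : ℕ → Fin k → ℝ
  | 0 => fun _ => 0
  | n + 1 => if h : n < T then buB ⟨n, h⟩ (v ⟨n, h⟩) (balAux buB v n) else balAux buB v n

/-- The dynamic mechanism induced by a bank account mechanism. -/
noncomputable def induced (mB buB : BankMap k T) : Mech k T :=
  fun t v => mB t (v t) (balAux buB v (t : ℕ))

/-! ### Adaptive reporting strategies -/

/-- An adaptive reporting strategy for a single buyer: in each period `t` it maps the
buyer's observed history of past true values, past reports, and the current true value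
to a report. (Only the entries of the first two arguments at periods `< t` are ever
used.) -/
abbrev Strat (T : ℕ) := Fin T → (Fin T → ℝ) → (Fin T → ℝ) → ℝ → ℝ

/-- The report sequence of a buyer with true value sequence `w` playing strategy `σ`
(defined recursively: the report in period `n` may depend on the true values and
reports of periods `< n` and on the current true value `w n`). -/
noncomputable def reports {T : ℕ} (σ : Strat T) (w : Fin T → ℝ) (n : ℕ) : ℝ :=
  Nat.strongRecOn n (fun n ih =>
    if h : n < T then
      σ ⟨n, h⟩ (fun τ => if (τ : ℕ) < n then w τ else 0)
        (fun τ => if h' : (τ : ℕ) < n then ih τ h' else 0) (w ⟨n, h⟩)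
    else 0)

/-- The report matrix when buyer `i` has true values `w` and plays strategy `σ`, while
the other buyers truthfully report their fixed values `vo`. -/
noncomputable def stratHist {k T : ℕ} (i : Fin k) (vo : Val k T) (σ : Strat T)
    (w : Fin T → ℝ) : Val k T :=
  fun τ j => if j = i then reports σ w (τ : ℕ) else vo τ j

/-- The report matrix when buyer `i` truthfully reports `w` and the other buyers
truthfully report their fixed values `vo`. -/
def truthHist {k T : ℕ} (i : Fin k) (vo : Val k T) (w : Fin T → ℝ) : Val k T :=
  fun τ j => if j = i then w τ else vo τ j


/-! ### Auxiliary machinery for Statement 2 -/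

theorem reports_def {T : ℕ} (σ : Strat T) (w : Fin T → ℝ) (n : ℕ) :
    reports σ w n =
      if h : n < T then
        σ ⟨n, h⟩ (fun τ => if (τ : ℕ) < n then w τ else 0)
          (fun τ => if _ : (τ : ℕ) < n then reports σ w τ else 0) (w ⟨n, h⟩)
      else 0 := by
  rw [reports, Nat.strongRecOn_eq]; rfl

theorem reports_congr {T : ℕ} (σ : Strat T) (w w' : Fin T → ℝ) (n : ℕ)
    (hw : ∀ τ : Fin T, (τ : ℕ) ≤ n → w τ = w' τ) :
    reports σ w n = reports σ w' n := by
  induction n using Nat.strong_induction_on with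
  | _ n ih =>
    rw [reports_def, reports_def]
    split
    · next h =>
      have e1 : (fun τ : Fin T => if (τ : ℕ) < n then w τ else 0)
          = fun τ : Fin T => if (τ : ℕ) < n then w' τ else 0 := by
        funext τ
        by_cases h' : (τ : ℕ) < n
        · simp only [if_pos h', hw τ h'.le]
        · simp only [if_neg h']
      have e2 : (fun τ : Fin T => if _ : (τ : ℕ) < n then reports σ w τ else 0)
          = fun τ : Fin T => if _ : (τ : ℕ) < n then reports σ w' τ else 0 := by
        funext τ
        by_cases h' : (τ : ℕ) < n
        · simp only [dif_pos h']
          exact ih τ h' (fun τ' hτ' => hw τ' (hτ'.trans h'.le))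
        · simp only [dif_neg h']
      rw [e1, e2, hw ⟨n, h⟩ (le_refl n)]
    · rfl

theorem mem_buyerSeqs {k T : ℕ} {S : Setting k T} {i : Fin k} {w : Fin T → ℝ} :
    w ∈ buyerSeqs S i ↔ ∀ t, w t ∈ S.V i t := Fintype.mem_piFinset

theorem buyerProb_nonneg {k T : ℕ} (S : Setting k T) (i : Fin k) {w : Fin T → ℝ}
    (hw : w ∈ buyerSeqs S i) : 0 ≤ buyerProb S i w := by
  rw [mem_buyerSeqs] at hw
  exact Finset.prod_nonneg fun τ _ => (S.f_pos i τ _ (hw τ)).le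

theorem sum_buyerProb {k T : ℕ} (S : Setting k T) (i : Fin k) :
    ∑ w ∈ buyerSeqs S i, buyerProb S i w = 1 := by
  unfold buyerSeqs buyerProb
  rw [← Finset.prod_univ_sum]
  simp [S.f_sum]

/-- Merge two value sequences: coordinates `≤ m` from the first, `> m` from the second. -/
def mergeVals {T : ℕ} (m : ℕ) (w w' : Fin T → ℝ) : Fin T → ℝ :=
  fun τ => if (τ : ℕ) ≤ m then w τ else w' τ

theorem mergeVals_mem {k T : ℕ} (S : Setting k T) (i : Fin k) (m : ℕ) {w w' : Fin T → ℝ}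
    (hw : w ∈ buyerSeqs S i) (hw' : w' ∈ buyerSeqs S i) :
    mergeVals m w w' ∈ buyerSeqs S i := by
  rw [mem_buyerSeqs] at *
  intro τ
  unfold mergeVals
  split
  · exact hw τ
  · exact hw' τ

theorem mergeVals_invol {T : ℕ} (m : ℕ) (a b : Fin T → ℝ) :
    mergeVals m (mergeVals m a b) (mergeVals m b a) = a := by
  funext τ; unfold mergeVals; by_cases h : (τ : ℕ) ≤ m <;> simp [h]

theorem mergeVals_prob {k T : ℕ} (S : Setting k T) (i : Fin k) (m : ℕ) (w w' : Fin T → ℝ) :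
    buyerProb S i (mergeVals m w w') * buyerProb S i (mergeVals m w' w)
      = buyerProb S i w * buyerProb S i w' := by
  unfold buyerProb mergeVals
  rw [← Finset.prod_mul_distrib, ← Finset.prod_mul_distrib]
  refine Finset.prod_congr rfl fun τ _ => ?_
  by_cases h : (τ : ℕ) ≤ m <;> simp [h, mul_comm]

/-- Fubini / independence across the periods `≤ m` and `> m`. -/
theorem fubini_merge {k T : ℕ} (S : Setting k T) (i : Fin k) (m : ℕ)
    (F : (Fin T → ℝ) → (Fin T → ℝ) → ℝ)
    (hF : ∀ w ∈ buyerSeqs S i, ∀ w' ∈ buyerSeqs S i,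
      F (mergeVals m w w') (mergeVals m w' w) = F w w) :
    ∑ w ∈ buyerSeqs S i, buyerProb S i w *
        ∑ w' ∈ buyerSeqs S i, buyerProb S i w' * F w w'
      = ∑ w ∈ buyerSeqs S i, buyerProb S i w * F w w := by
  classical
  have hs : ∀ q ∈ (buyerSeqs S i) ×ˢ (buyerSeqs S i),
      (mergeVals m q.1 q.2, mergeVals m q.2 q.1) ∈ (buyerSeqs S i) ×ˢ (buyerSeqs S i) := by
    intro q hq
    rw [Finset.mem_product] at hq ⊢
    exact ⟨mergeVals_mem S i m hq.1 hq.2, mergeVals_mem S i m hq.2 hq.1⟩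
  calc ∑ w ∈ buyerSeqs S i, buyerProb S i w *
          ∑ w' ∈ buyerSeqs S i, buyerProb S i w' * F w w'
      = ∑ q ∈ (buyerSeqs S i) ×ˢ (buyerSeqs S i),
          buyerProb S i q.1 * (buyerProb S i q.2 * F q.1 q.2) := by
        rw [Finset.sum_product]
        exact Finset.sum_congr rfl fun w _ => Finset.mul_sum _ _ _
    _ = ∑ q ∈ (buyerSeqs S i) ×ˢ (buyerSeqs S i),
          buyerProb S i q.1 * (buyerProb S i q.2 * F q.1 q.1) := by
        refine (Finset.sum_nbij' (fun q => (mergeVals m q.1 q.2, mergeVals m q.2 q.1))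
          (fun q => (mergeVals m q.1 q.2, mergeVals m q.2 q.1)) hs hs
          (fun q _ => by simp [mergeVals_invol]) (fun q _ => by simp [mergeVals_invol])
          ?_).symm
        intro q hq
        rw [Finset.mem_product] at hq
        calc buyerProb S i q.1 * (buyerProb S i q.2 * F q.1 q.1)
            = (buyerProb S i q.1 * buyerProb S i q.2) * F q.1 q.1 := by ring
          _ = (buyerProb S i (mergeVals m q.1 q.2) * buyerProb S i (mergeVals m q.2 q.1))
                * F (mergeVals m q.1 q.2) (mergeVals m q.2 q.1) := by
              rw [mergeVals_prob S i m q.1 q.2, hF q.1 hq.1 q.2 hq.2]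
          _ = buyerProb S i (mergeVals m q.1 q.2) * (buyerProb S i (mergeVals m q.2 q.1)
                * F (mergeVals m q.1 q.2) (mergeVals m q.2 q.1)) := by ring
    _ = ∑ w ∈ buyerSeqs S i, buyerProb S i w * F w w := by
        rw [Finset.sum_product]
        refine Finset.sum_congr rfl fun w _ => ?_
        dsimp only
        have h1 : ∑ w' ∈ buyerSeqs S i, buyerProb S i w' * F w w = F w w := by
          rw [← Finset.sum_mul, sum_buyerProb, one_mul]
        rw [← Finset.mul_sum, h1]

/-- The hybrid history: buyer `i` plays `σ` in periods `< m` and the truth afterwards. -/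
noncomputable def hyb {k T : ℕ} (i : Fin k) (vo : Val k T) (σ : Strat T) (m : ℕ)
    (w : Fin T → ℝ) : Val k T :=
  fun τ j => if j = i then (if (τ : ℕ) < m then reports σ w (τ : ℕ) else w τ) else vo τ j

theorem reports_mem {k T : ℕ} (S : Setting k T) (i : Fin k) (σ : Strat T)
    (hσ : ∀ (t : Fin T) (past rep : Fin T → ℝ), ∀ vi ∈ S.V i t, σ t past rep vi ∈ S.V i t)
    {w : Fin T → ℝ} (t : Fin T) (hwt : w t ∈ S.V i t) :
    reports σ w (t : ℕ) ∈ S.V i t := by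
  rw [reports_def, dif_pos t.isLt]
  simp only [Fin.eta]
  exact hσ t _ _ (w t) hwt

theorem hyb_valid {k T : ℕ} (S : Setting k T) (i : Fin k) (vo : Val k T)
    (hvo : ∀ (t : Fin T) (j : Fin k), j ≠ i → vo t j ∈ S.V j t) (σ : Strat T)
    (hσ : ∀ (t : Fin T) (past rep : Fin T → ℝ), ∀ vi ∈ S.V i t, σ t past rep vi ∈ S.V i t)
    (m : ℕ) {w : Fin T → ℝ} (hw : w ∈ buyerSeqs S i) :
    ValidSeq S (hyb i vo σ m w) := by
  have hw' := mem_buyerSeqs.mp hw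
  intro τ j
  unfold hyb
  by_cases hj : j = i
  · subst hj
    rw [if_pos rfl]
    split
    · exact reports_mem S j σ hσ τ (hw' τ)
    · exact hw' τ
  · rw [if_neg hj]
    exact hvo τ j hj

theorem hyb_succ_agree {k T : ℕ} (i : Fin k) (vo : Val k T) (σ : Strat T) (m : ℕ)
    (w : Fin T → ℝ) (τ : Fin T) (hτ : (τ : ℕ) ≠ m) :
    hyb i vo σ (m + 1) w τ = hyb i vo σ m w τ := by
  funext j
  unfold hyb
  have h : ((τ : ℕ) < m + 1) ↔ ((τ : ℕ) < m) := by omega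
  simp [h]

theorem replace_hyb_self {k T : ℕ} (i : Fin k) (vo : Val k T) (σ : Strat T) (m : ℕ)
    (hm : m < T) (w : Fin T → ℝ) :
    replace (hyb i vo σ m w) i ⟨m, hm⟩ (w ⟨m, hm⟩) = hyb i vo σ m w := by
  funext τ j
  unfold replace hyb
  by_cases h : τ = (⟨m, hm⟩ : Fin T) ∧ j = i
  · obtain ⟨h1, h2⟩ := h
    subst h1; subst h2
    simp
  · simp [h]

theorem replace_hyb_rep {k T : ℕ} (i : Fin k) (vo : Val k T) (σ : Strat T) (m : ℕ)
    (hm : m < T) (w : Fin T → ℝ) :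
    replace (hyb i vo σ m w) i ⟨m, hm⟩ (reports σ w m) = hyb i vo σ (m + 1) w := by
  funext τ j
  unfold replace hyb
  by_cases hj : j = i
  · subst hj
    by_cases hτ : τ = (⟨m, hm⟩ : Fin T)
    · subst hτ
      simp
    · have hne : (τ : ℕ) ≠ m := fun h => hτ (Fin.ext h)
      have hiff : ((τ : ℕ) < m + 1) ↔ ((τ : ℕ) < m) := by omega
      simp [hτ, hiff]
  · simp [hj]

theorem blend_hyb {k T : ℕ} (i : Fin k) (vo : Val k T) (σ : Strat T) (m m' : ℕ)
    (hm : m < T) (hm' : m' ≤ m + 1) (w : Fin T → ℝ) :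
    blend i ⟨m, hm⟩ (hyb i vo σ m' w) w = hyb i vo σ m' w := by
  funext τ j
  unfold blend hyb
  by_cases h : (⟨m, hm⟩ : Fin T) < τ ∧ j = i
  · obtain ⟨h1, h2⟩ := h
    have hmτ : m < (τ : ℕ) := h1
    have hnlt : ¬ (τ : ℕ) < m' := by omega
    simp [h1, h2, hnlt]
  · simp [h]

theorem blend_hyb_merge {k T : ℕ} (i : Fin k) (vo : Val k T) (σ : Strat T) (m m' : ℕ)
    (hm : m < T) (w w' : Fin T → ℝ) :
    blend i ⟨m, hm⟩ (hyb i vo σ m' (mergeVals m w w')) (mergeVals m w' w)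
      = blend i ⟨m, hm⟩ (hyb i vo σ m' w) w := by
  funext τ j
  unfold blend
  by_cases h : (⟨m, hm⟩ : Fin T) < τ ∧ j = i
  · have hmτ : m < (τ : ℕ) := h.1
    have hτ : ¬ (τ : ℕ) ≤ m := by omega
    simp [h, mergeVals, hτ]
  · rw [if_neg h, if_neg h]
    unfold hyb
    by_cases hj : j = i
    · subst hj
      have hτ : (τ : ℕ) ≤ m := by
        by_contra hc
        exact h ⟨Fin.lt_def.mpr (by simpa using Nat.lt_of_not_le hc), rfl⟩
      rw [if_pos rfl, if_pos rfl]
      by_cases hlt : (τ : ℕ) < m'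
      · rw [if_pos hlt, if_pos hlt]
        refine reports_congr σ _ _ (τ : ℕ) fun τ' hτ' => ?_
        unfold mergeVals
        rw [if_pos (hτ'.trans hτ)]
      · rw [if_neg hlt, if_neg hlt]
        unfold mergeVals
        rw [if_pos hτ]
    · rw [if_neg hj, if_neg hj]

set_option maxHeartbeats 2000000 in
theorem hybEU_expand {k T : ℕ} (S : Setting k T) (x p : Mech k T) (i : Fin k)
    (vo : Val k T) (σ : Strat T) (m m' : ℕ) (hm : m < T) (hm'' : m' ≤ m + 1) :
    ∑ w ∈ buyerSeqs S i, buyerProb S i w * ∑ t, util x p i t (w t) (hyb i vo σ m' w)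
      = ∑ w ∈ buyerSeqs S i, buyerProb S i w *
          ((∑ t ∈ univ.filter (fun τ : Fin T => ¬ (⟨m, hm⟩ : Fin T) < τ),
              util x p i t (w t) (hyb i vo σ m' w))
            + contUtil S x p i ⟨m, hm⟩ (hyb i vo σ m' w)) := by
  classical
  have hsplit : ∀ w : Fin T → ℝ, (∑ t, util x p i t (w t) (hyb i vo σ m' w))
      = (∑ t ∈ univ.filter (fun τ : Fin T => ¬ (⟨m, hm⟩ : Fin T) < τ),
          util x p i t (w t) (hyb i vo σ m' w))
        + (∑ t ∈ univ.filter (fun τ : Fin T => (⟨m, hm⟩ : Fin T) < τ),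
          util x p i t (w t) (hyb i vo σ m' w)) := by
    intro w
    rw [← Finset.sum_filter_add_sum_filter_not univ (fun τ : Fin T => (⟨m, hm⟩ : Fin T) < τ)
      (fun t => util x p i t (w t) (hyb i vo σ m' w))]
    exact add_comm _ _
  have hcont : ∀ vhat : Val k T, contUtil S x p i ⟨m, hm⟩ vhat
      = ∑ w' ∈ buyerSeqs S i, buyerProb S i w' *
          ∑ τ ∈ univ.filter (fun τ : Fin T => (⟨m, hm⟩ : Fin T) < τ),
            util x p i τ (w' τ) (blend i ⟨m, hm⟩ vhat w') := fun vhat => rfl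
  have hmain : ∑ w ∈ buyerSeqs S i, buyerProb S i w *
        ∑ t ∈ univ.filter (fun τ : Fin T => (⟨m, hm⟩ : Fin T) < τ),
          util x p i t (w t) (hyb i vo σ m' w)
      = ∑ w ∈ buyerSeqs S i, buyerProb S i w * contUtil S x p i ⟨m, hm⟩ (hyb i vo σ m' w) := by
    have hF : ∀ w ∈ buyerSeqs S i, ∀ w' ∈ buyerSeqs S i,
        (fun a b => ∑ τ ∈ univ.filter (fun τ : Fin T => (⟨m, hm⟩ : Fin T) < τ),
          util x p i τ (b τ) (blend i ⟨m, hm⟩ (hyb i vo σ m' a) b))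
            (mergeVals m w w') (mergeVals m w' w)
          = (fun a b => ∑ τ ∈ univ.filter (fun τ : Fin T => (⟨m, hm⟩ : Fin T) < τ),
          util x p i τ (b τ) (blend i ⟨m, hm⟩ (hyb i vo σ m' a) b)) w w := by
      intro w hw w' hw'
      dsimp only
      rw [blend_hyb_merge i vo σ m m' hm w w']
      refine Finset.sum_congr rfl fun τ hτ => ?_
      rw [Finset.mem_filter] at hτ
      have hmτ : m < (τ : ℕ) := hτ.2
      have hmw : mergeVals m w' w τ = w τ := by
        unfold mergeVals
        rw [if_neg (by omega)]
      rw [hmw]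
    calc ∑ w ∈ buyerSeqs S i, buyerProb S i w *
          ∑ t ∈ univ.filter (fun τ : Fin T => (⟨m, hm⟩ : Fin T) < τ),
            util x p i t (w t) (hyb i vo σ m' w)
        = ∑ w ∈ buyerSeqs S i, buyerProb S i w *
            ∑ τ ∈ univ.filter (fun τ : Fin T => (⟨m, hm⟩ : Fin T) < τ),
              util x p i τ (w τ) (blend i ⟨m, hm⟩ (hyb i vo σ m' w) w) := by
          refine Finset.sum_congr rfl fun w _ => ?_
          rw [blend_hyb i vo σ m m' hm hm'' w]
      _ = ∑ w ∈ buyerSeqs S i, buyerProb S i w *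
            ∑ w' ∈ buyerSeqs S i, buyerProb S i w' *
              ∑ τ ∈ univ.filter (fun τ : Fin T => (⟨m, hm⟩ : Fin T) < τ),
                util x p i τ (w' τ) (blend i ⟨m, hm⟩ (hyb i vo σ m' w) w') :=
          (fubini_merge S i m (fun a b =>
            ∑ τ ∈ univ.filter (fun τ : Fin T => (⟨m, hm⟩ : Fin T) < τ),
              util x p i τ (b τ) (blend i ⟨m, hm⟩ (hyb i vo σ m' a) b)) hF).symm
      _ = ∑ w ∈ buyerSeqs S i, buyerProb S i w * contUtil S x p i ⟨m, hm⟩ (hyb i vo σ m' w) := by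
          refine Finset.sum_congr rfl fun w _ => ?_
          rw [hcont]
  calc ∑ w ∈ buyerSeqs S i, buyerProb S i w * ∑ t, util x p i t (w t) (hyb i vo σ m' w)
      = ∑ w ∈ buyerSeqs S i, (buyerProb S i w *
            ∑ t ∈ univ.filter (fun τ : Fin T => ¬ (⟨m, hm⟩ : Fin T) < τ),
              util x p i t (w t) (hyb i vo σ m' w)
          + buyerProb S i w *
            ∑ t ∈ univ.filter (fun τ : Fin T => (⟨m, hm⟩ : Fin T) < τ),
              util x p i t (w t) (hyb i vo σ m' w)) := by
        refine Finset.sum_congr rfl fun w _ => ?_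
        rw [hsplit w, mul_add]
    _ = (∑ w ∈ buyerSeqs S i, buyerProb S i w *
            ∑ t ∈ univ.filter (fun τ : Fin T => ¬ (⟨m, hm⟩ : Fin T) < τ),
              util x p i t (w t) (hyb i vo σ m' w))
        + ∑ w ∈ buyerSeqs S i, buyerProb S i w *
            ∑ t ∈ univ.filter (fun τ : Fin T => (⟨m, hm⟩ : Fin T) < τ),
              util x p i t (w t) (hyb i vo σ m' w) := by
        rw [Finset.sum_add_distrib]
    _ = (∑ w ∈ buyerSeqs S i, buyerProb S i w *
            ∑ t ∈ univ.filter (fun τ : Fin T => ¬ (⟨m, hm⟩ : Fin T) < τ),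
              util x p i t (w t) (hyb i vo σ m' w))
        + ∑ w ∈ buyerSeqs S i, buyerProb S i w * contUtil S x p i ⟨m, hm⟩ (hyb i vo σ m' w) := by
        rw [hmain]
    _ = ∑ w ∈ buyerSeqs S i, buyerProb S i w *
          ((∑ t ∈ univ.filter (fun τ : Fin T => ¬ (⟨m, hm⟩ : Fin T) < τ),
              util x p i t (w t) (hyb i vo σ m' w))
            + contUtil S x p i ⟨m, hm⟩ (hyb i vo σ m' w)) := by
        rw [← Finset.sum_add_distrib]
        exact Finset.sum_congr rfl fun w _ => (mul_add _ _ _).symm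

theorem hybEU_step {k T : ℕ} (S : Setting k T) (x p : Mech k T)
    (hxpre : PrefixDep x) (hppre : PrefixDep p) (hdic : DIC S x p)
    (i : Fin k) (vo : Val k T)
    (hvo : ∀ (t : Fin T) (j : Fin k), j ≠ i → vo t j ∈ S.V j t) (σ : Strat T)
    (hσ : ∀ (t : Fin T) (past rep : Fin T → ℝ), ∀ vi ∈ S.V i t, σ t past rep vi ∈ S.V i t)
    (m : ℕ) :
    ∑ w ∈ buyerSeqs S i, buyerProb S i w * ∑ t, util x p i t (w t) (hyb i vo σ (m + 1) w)
      ≤ ∑ w ∈ buyerSeqs S i, buyerProb S i w * ∑ t, util x p i t (w t) (hyb i vo σ m w) := by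
  classical
  by_cases hm : m < T
  · rw [hybEU_expand S x p i vo σ m (m + 1) hm (le_refl _),
        hybEU_expand S x p i vo σ m m hm (Nat.le_succ m)]
    refine Finset.sum_le_sum fun w hw => ?_
    refine mul_le_mul_of_nonneg_left ?_ (buyerProb_nonneg S i hw)
    have hins : univ.filter (fun τ : Fin T => ¬ (⟨m, hm⟩ : Fin T) < τ)
        = insert (⟨m, hm⟩ : Fin T) (univ.filter (fun τ : Fin T => τ < (⟨m, hm⟩ : Fin T))) := by
      ext τ
      simp only [Finset.mem_filter, Finset.mem_univ, true_and, Finset.mem_insert, not_lt,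
        le_iff_lt_or_eq]
      tauto
    have hnotmem : (⟨m, hm⟩ : Fin T) ∉
        univ.filter (fun τ : Fin T => τ < (⟨m, hm⟩ : Fin T)) := by
      simp
    rw [hins, Finset.sum_insert hnotmem, Finset.sum_insert hnotmem]
    have hpre : ∑ t ∈ univ.filter (fun τ : Fin T => τ < (⟨m, hm⟩ : Fin T)),
          util x p i t (w t) (hyb i vo σ (m + 1) w)
        = ∑ t ∈ univ.filter (fun τ : Fin T => τ < (⟨m, hm⟩ : Fin T)),
          util x p i t (w t) (hyb i vo σ m w) := by
      refine Finset.sum_congr rfl fun τ hτ => ?_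
      rw [Finset.mem_filter] at hτ
      have hτm : (τ : ℕ) < m := hτ.2
      have hagree : ∀ τ' : Fin T, τ' ≤ τ → hyb i vo σ (m + 1) w τ' = hyb i vo σ m w τ' := by
        intro τ' hτ'
        have hle : (τ' : ℕ) ≤ (τ : ℕ) := hτ'
        exact hyb_succ_agree i vo σ m w τ' (by omega)
      unfold util
      rw [hxpre τ _ _ hagree, hppre τ _ _ hagree]
    rw [hpre]
    have hw' := mem_buyerSeqs.mp hw
    have hdic' := hdic (hyb i vo σ m w) (hyb_valid S i vo hvo σ hσ m hw) i ⟨m, hm⟩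
      (w ⟨m, hm⟩) (hw' ⟨m, hm⟩) (reports σ w m) (by
        have := reports_mem S i σ hσ (w := w) ⟨m, hm⟩ (hw' ⟨m, hm⟩)
        simpa using this)
    rw [replace_hyb_self i vo σ m hm w, replace_hyb_rep i vo σ m hm w] at hdic'
    linarith
  · have heq : hyb i vo σ (m + 1) = hyb i vo σ m := by
      funext w τ j
      unfold hyb
      have h1 : (τ : ℕ) < m := lt_of_lt_of_le τ.isLt (Nat.le_of_not_lt hm)
      have h2 : (τ : ℕ) < m + 1 := by omega
      simp [h1, h2]
    rw [heq]

/-- If a dynamic mechanism is DIC, then for every buyer `i` and every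
fixed profile of truthful reports by the other buyers, truthful reporting maximizes
buyer `i`'s expected total utility among all adaptive reporting strategies. -/
theorem DIC_implies_truthful_optimal_among_adaptive_strategies
    (k T : ℕ) (hk : 1 ≤ k) (hT : 1 ≤ T) (S : Setting k T)
    (x p : Mech k T)
    (hx01 : ∀ t v i, 0 ≤ x t v i ∧ x t v i ≤ 1)
    (hxfeas : ∀ t v, ∑ i, x t v i ≤ 1)
    (hxpre : PrefixDep x) (hppre : PrefixDep p)
    (hdic : DIC S x p)
    (i : Fin k) (vo : Val k T) (hvo : ∀ (t : Fin T) (j : Fin k), j ≠ i → vo t j ∈ S.V j t)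
    (σ : Strat T)
    (hσ : ∀ (t : Fin T) (past rep : Fin T → ℝ), ∀ vi ∈ S.V i t, σ t past rep vi ∈ S.V i t) :
    ∑ w ∈ buyerSeqs S i, buyerProb S i w *
        ∑ t, util x p i t (w t) (stratHist i vo σ w)
      ≤ ∑ w ∈ buyerSeqs S i, buyerProb S i w *
          ∑ t, util x p i t (w t) (truthHist i vo w) := by
  classical
  have hstrat : ∀ w : Fin T → ℝ, stratHist i vo σ w = hyb i vo σ T w := by
    intro w
    funext τ j
    unfold stratHist hyb
    simp [τ.isLt]
  have htruth : ∀ w : Fin T → ℝ, truthHist i vo w = hyb i vo σ 0 w := by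
    intro w
    funext τ j
    unfold truthHist hyb
    simp
  have key : ∀ m : ℕ,
      ∑ w ∈ buyerSeqs S i, buyerProb S i w * ∑ t, util x p i t (w t) (hyb i vo σ m w)
        ≤ ∑ w ∈ buyerSeqs S i, buyerProb S i w * ∑ t, util x p i t (w t) (hyb i vo σ 0 w) := by
    intro m
    induction m with
    | zero => exact le_refl _
    | succ n ihn => exact le_trans (hybEU_step S x p hxpre hppre hdic i vo hvo σ hσ n) ihn
  calc ∑ w ∈ buyerSeqs S i, buyerProb S i w * ∑ t, util x p i t (w t) (stratHist i vo σ w)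
      = ∑ w ∈ buyerSeqs S i, buyerProb S i w * ∑ t, util x p i t (w t) (hyb i vo σ T w) := by
        refine Finset.sum_congr rfl fun w _ => ?_
        rw [hstrat w]
    _ ≤ ∑ w ∈ buyerSeqs S i, buyerProb S i w * ∑ t, util x p i t (w t) (hyb i vo σ 0 w) := key T
    _ = ∑ w ∈ buyerSeqs S i, buyerProb S i w * ∑ t, util x p i t (w t) (truthHist i vo w) := by
        refine Finset.sum_congr rfl fun w _ => ?_
        rw [htruth w]


end DynAuction
end

section
/- For every concave g : ℝ^k → ℝ and every family ξ = (ξ_i)_i with ξ_i : V_{-i} → ℝ≥0, the map b ↦ G(g, b, ξ) is concave on (ℝ≥0)^k: for all b, b' ∈ (ℝ≥0)^k and θ ∈ [0,1], G(g, θ·b + (1−θ)·b', ξ) ≥ θ·G(g, b, ξ) + (1−θ)·G(g, b', ξ). -/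
open Finset

namespace SinglePeriod

/-- A single-period setting with `k` buyers: finite nonnegative value spaces and
full-support probability mass functions, independent across buyers. -/
structure Setting (k : ℕ) where
  V : Fin k → Finset ℝ
  V_nonempty : ∀ i, (V i).Nonempty
  V_nonneg : ∀ i, ∀ s ∈ V i, (0 : ℝ) ≤ s
  f : Fin k → ℝ → ℝ
  f_pos : ∀ i, ∀ s ∈ V i, 0 < f i s
  f_sum : ∀ i, ∑ s ∈ V i, f i s = 1

variable {k : ℕ}

/-- The finite set of all (valid) value profiles. -/
noncomputable def profiles (S : Setting k) : Finset (Fin k → ℝ) :=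
  Fintype.piFinset fun i => S.V i

/-- Probability of a value profile (independent coordinates). -/
noncomputable def prob (S : Setting k) (v : Fin k → ℝ) : ℝ := ∏ i, S.f i (v i)

/-- The largest element of `V i` strictly below `s`, or `0` if none exists. -/
noncomputable def predV (S : Setting k) (i : Fin k) (s : ℝ) : ℝ :=
  WithBot.unbotD 0 (((S.V i).filter fun s' => s' < s).max)

/-- An allocation rule. -/
abbrev Alloc (k : ℕ) := (Fin k → ℝ) → Fin k → ℝ

/-- A family `ξ = (ξ_i)_i` of per-buyer expected utilities; `ξ i v` is required to
depend only on `v_{-i}` (see `ValidXi`). -/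
abbrev Util (k : ℕ) := Fin k → (Fin k → ℝ) → ℝ

/-- `ξ` is a valid family: nonnegative and `ξ i` depends only on the coordinates
other than `i`. -/
def ValidXi (S : Setting k) (ξ : Util k) : Prop :=
  (∀ i v, 0 ≤ ξ i v) ∧
  (∀ (i : Fin k) (v : Fin k → ℝ) (s : ℝ), ξ i (Function.update v i s) = ξ i v)

/-- Envelope utility `u'_i(v) = Σ_{s ∈ V_i, s ≤ v_i} x_i(s, v_{-i}) (s - pred s)`. -/
noncomputable def envU (S : Setting k) (x : Alloc k) (i : Fin k) (v : Fin k → ℝ) : ℝ :=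
  ∑ s ∈ (S.V i).filter (fun s => s ≤ v i), x (Function.update v i s) i * (s - predV S i s)

/-- `ū'_i(v_{-i}) = E_{v_i}[u'_i(v)]`. -/
noncomputable def envUbar (S : Setting k) (x : Alloc k) (i : Fin k) (v : Fin k → ℝ) : ℝ :=
  ∑ s ∈ S.V i, S.f i s * envU S x i (Function.update v i s)

/-- Balance increment `Δb_i(v) = u'_i(v) - ū'_i(v_{-i}) + ξ_i(v_{-i})`. -/
noncomputable def deltaB (S : Setting k) (x : Alloc k) (ξ : Util k)
    (v : Fin k → ℝ) (i : Fin k) : ℝ :=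
  envU S x i v - envUbar S x i v + ξ i v

/-- The objective of the single-period program `P(g, b, ξ)` at allocation `x`. -/
noncomputable def obj (S : Setting k) (g : (Fin k → ℝ) → ℝ) (b : Fin k → ℝ)
    (ξ : Util k) (x : Alloc k) : ℝ :=
  ∑ v ∈ profiles S, prob S v *
    ((∑ i, (v i * x v i - ξ i v)) + g (fun i => deltaB S x ξ v i + b i))

/-- Feasibility for the single-period program `P(g, b, ξ)`: allocation bounds,
feasibility, monotonicity, and the balance constraint. -/
def Feasible (S : Setting k) (b : Fin k → ℝ) (ξ : Util k) (x : Alloc k) : Prop :=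
  (∀ v ∈ profiles S, ∀ i, 0 ≤ x v i ∧ x v i ≤ 1) ∧
  (∀ v ∈ profiles S, ∑ i, x v i ≤ 1) ∧
  (∀ (i : Fin k), ∀ v ∈ profiles S, ∀ s ∈ S.V i, ∀ s' ∈ S.V i, s ≤ s' →
    x (Function.update v i s) i ≤ x (Function.update v i s') i) ∧
  (∀ (i : Fin k), ∀ v ∈ profiles S, envUbar S x i v ≤ b i + ξ i v)

/-- `G(g, b, ξ)`: the optimal value (supremum) of the program `P(g, b, ξ)`. -/
noncomputable def G (S : Setting k) (g : (Fin k → ℝ) → ℝ) (b : Fin k → ℝ)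
    (ξ : Util k) : ℝ :=
  sSup {r : ℝ | ∃ x : Alloc k, Feasible S b ξ x ∧ r = obj S g b ξ x}


variable {k : ℕ}

lemma mem_profiles_iff {S : Setting k} {v : Fin k → ℝ} :
    v ∈ profiles S ↔ ∀ i, v i ∈ S.V i := by
  simp [profiles, Fintype.mem_piFinset]

lemma update_mem_profiles {S : Setting k} {v : Fin k → ℝ} (hv : v ∈ profiles S)
    {i : Fin k} {s : ℝ} (hs : s ∈ S.V i) : Function.update v i s ∈ profiles S := by
  rw [mem_profiles_iff] at hv ⊢
  intro j
  by_cases h : j = i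
  · subst h; simp [hs]
  · simp [Function.update_of_ne h, hv j]

lemma predV_bounds {S : Setting k} {i : Fin k} {s : ℝ} (hs : s ∈ S.V i) :
    0 ≤ predV S i s ∧ predV S i s ≤ s := by
  unfold predV
  cases h : ((S.V i).filter fun s' => s' < s).max with
  | bot => simp [WithBot.unbotD_bot]; exact S.V_nonneg i s hs
  | coe a =>
      have ha := Finset.mem_of_max h
      rw [Finset.mem_filter] at ha
      simp only [WithBot.unbotD_coe]
      exact ⟨S.V_nonneg i a ha.1, le_of_lt ha.2⟩

lemma prob_nonneg {S : Setting k} {v : Fin k → ℝ} (hv : v ∈ profiles S) :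
    0 ≤ prob S v := by
  rw [mem_profiles_iff] at hv
  exact Finset.prod_nonneg fun i _ => (S.f_pos i (v i) (hv i)).le

lemma envU_bounds {S : Setting k} {x : Alloc k}
    (hx : ∀ v ∈ profiles S, ∀ i, 0 ≤ x v i ∧ x v i ≤ 1)
    {v : Fin k → ℝ} (hv : v ∈ profiles S) (i : Fin k) :
    0 ≤ envU S x i v ∧ envU S x i v ≤ ∑ s ∈ S.V i, s := by
  constructor
  · apply Finset.sum_nonneg
    intro s hs
    rw [Finset.mem_filter] at hs
    have h1 := (hx _ (update_mem_profiles hv hs.1) i).1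
    have h2 := (predV_bounds (S := S) hs.1).2
    exact mul_nonneg h1 (by linarith)
  · calc envU S x i v ≤ ∑ s ∈ (S.V i).filter (fun s => s ≤ v i), s := by
          apply Finset.sum_le_sum
          intro s hs
          rw [Finset.mem_filter] at hs
          have h1 := hx _ (update_mem_profiles hv hs.1) i
          have h2 := predV_bounds (S := S) hs.1
          nlinarith [h1.1, h1.2, h2.1, h2.2]
        _ ≤ ∑ s ∈ S.V i, s := by
          apply Finset.sum_le_sum_of_subset_of_nonneg (Finset.filter_subset _ _)
          intro s hs _
          exact S.V_nonneg i s hs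

lemma envUbar_bounds {S : Setting k} {x : Alloc k}
    (hx : ∀ v ∈ profiles S, ∀ i, 0 ≤ x v i ∧ x v i ≤ 1)
    {v : Fin k → ℝ} (hv : v ∈ profiles S) (i : Fin k) :
    0 ≤ envUbar S x i v ∧ envUbar S x i v ≤ ∑ s ∈ S.V i, s := by
  constructor
  · apply Finset.sum_nonneg
    intro s hs
    exact mul_nonneg (S.f_pos i s hs).le
      (envU_bounds hx (update_mem_profiles hv hs) i).1
  · calc envUbar S x i v ≤ ∑ s ∈ S.V i, S.f i s * (∑ t ∈ S.V i, t) := by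
          apply Finset.sum_le_sum
          intro s hs
          exact mul_le_mul_of_nonneg_left
            (envU_bounds hx (update_mem_profiles hv hs) i).2 (S.f_pos i s hs).le
        _ = ∑ t ∈ S.V i, t := by rw [← Finset.sum_mul, S.f_sum i, one_mul]

lemma nonempty_objSet (S : Setting k) (g : (Fin k → ℝ) → ℝ) (b : Fin k → ℝ)
    (ξ : Util k) (hξ : ValidXi S ξ) (hb : ∀ i, 0 ≤ b i) :
    {r : ℝ | ∃ x : Alloc k, Feasible S b ξ x ∧ r = obj S g b ξ x}.Nonempty := by
  refine ⟨obj S g b ξ (fun _ _ => 0), fun _ _ => 0, ?_, rfl⟩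
  refine ⟨fun v _ i => by norm_num, fun v _ => by simp, fun i v _ s _ s' _ _ => le_refl _, ?_⟩
  intro i v hv
  have : envUbar S (fun _ _ => 0) i v = 0 := by
    simp [envUbar, envU]
  rw [this]
  have := hξ.1 i v
  have := hb i
  linarith

lemma bddAbove_objSet (S : Setting k) (g : (Fin k → ℝ) → ℝ)
    (hg : ConcaveOn ℝ Set.univ g) (b : Fin k → ℝ)
    (ξ : Util k) (hξ : ValidXi S ξ) (hb : ∀ i, 0 ≤ b i) :
    BddAbove {r : ℝ | ∃ x : Alloc k, Feasible S b ξ x ∧ r = obj S g b ξ x} := by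
  set M : ℝ := ∑ j, (2 * (∑ s ∈ S.V j, s) + (∑ w ∈ profiles S, ξ j w) + b j) with hM
  have hterm : ∀ j : Fin k, 0 ≤ 2 * (∑ s ∈ S.V j, s) + (∑ w ∈ profiles S, ξ j w) + b j := by
    intro j
    have h1 : 0 ≤ ∑ s ∈ S.V j, s := Finset.sum_nonneg fun s hs => S.V_nonneg j s hs
    have h2 : 0 ≤ ∑ w ∈ profiles S, ξ j w := Finset.sum_nonneg fun w _ => hξ.1 j w
    have := hb j
    linarith
  have hM0 : 0 ≤ M := Finset.sum_nonneg fun j _ => hterm j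
  have hgc : Continuous g := by
    rw [← continuousOn_univ]
    exact hg.continuousOn isOpen_univ
  obtain ⟨z, hz, hmax⟩ := (isCompact_closedBall (0 : Fin k → ℝ) M).exists_isMaxOn
    ⟨0, by simpa [Metric.mem_closedBall] using hM0⟩ hgc.continuousOn
  refine ⟨∑ v ∈ profiles S, prob S v * ((∑ j, ∑ s ∈ S.V j, s) + g z), ?_⟩
  rintro r ⟨x, hxf, rfl⟩
  obtain ⟨hx01, hxsum, hxmono, hxbal⟩ := hxf
  apply Finset.sum_le_sum
  intro v hv
  apply mul_le_mul_of_nonneg_left ?_ (prob_nonneg hv)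
  have hvV := mem_profiles_iff.1 hv
  have hpart1 : ∑ i, (v i * x v i - ξ i v) ≤ ∑ j, ∑ s ∈ S.V j, s := by
    apply Finset.sum_le_sum
    intro i _
    have h1 := hx01 v hv i
    have h2 := S.V_nonneg i (v i) (hvV i)
    have h3 : v i ≤ ∑ s ∈ S.V i, s :=
      Finset.single_le_sum (fun s hs => S.V_nonneg i s hs) (hvV i)
    have h4 := hξ.1 i v
    nlinarith [h1.1, h1.2]
  have hpart2 : g (fun i => deltaB S x ξ v i + b i) ≤ g z := by
    apply hmax
    show (fun i => deltaB S x ξ v i + b i) ∈ Metric.closedBall 0 M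
    rw [Metric.mem_closedBall, dist_zero_right]
    rw [pi_norm_le_iff_of_nonneg hM0]
    intro i
    rw [Real.norm_eq_abs, abs_le]
    have hU := envU_bounds hx01 hv i
    have hUb := envUbar_bounds hx01 hv i
    have hξb : ξ i v ≤ ∑ w ∈ profiles S, ξ i w :=
      Finset.single_le_sum (fun w _ => hξ.1 i w) hv
    have hξ0 := hξ.1 i v
    have hbi := hb i
    have hMi : 2 * (∑ s ∈ S.V i, s) + (∑ w ∈ profiles S, ξ i w) + b i ≤ M :=
      Finset.single_le_sum (fun j _ => hterm j) (Finset.mem_univ i)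
    unfold deltaB
    constructor <;> nlinarith [hU.1, hU.2, hUb.1, hUb.2]
  linarith

lemma envU_combine (S : Setting k) (x x' : Alloc k) (θ : ℝ) (i : Fin k) (v : Fin k → ℝ) :
    envU S (fun w j => θ * x w j + (1 - θ) * x' w j) i v
      = θ * envU S x i v + (1 - θ) * envU S x' i v := by
  unfold envU
  rw [Finset.mul_sum, Finset.mul_sum, ← Finset.sum_add_distrib]
  exact Finset.sum_congr rfl fun s _ => by ring

lemma envUbar_combine (S : Setting k) (x x' : Alloc k) (θ : ℝ) (i : Fin k) (v : Fin k → ℝ) :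
    envUbar S (fun w j => θ * x w j + (1 - θ) * x' w j) i v
      = θ * envUbar S x i v + (1 - θ) * envUbar S x' i v := by
  unfold envUbar
  rw [Finset.mul_sum, Finset.mul_sum, ← Finset.sum_add_distrib]
  refine Finset.sum_congr rfl fun s _ => ?_
  rw [envU_combine]
  ring

lemma deltaB_combine (S : Setting k) (x x' : Alloc k) (ξ : Util k) (θ : ℝ)
    (v : Fin k → ℝ) (i : Fin k) :
    deltaB S (fun w j => θ * x w j + (1 - θ) * x' w j) ξ v i
      = θ * deltaB S x ξ v i + (1 - θ) * deltaB S x' ξ v i := by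
  unfold deltaB
  rw [envU_combine, envUbar_combine]
  ring

lemma feasible_combine {S : Setting k} {b b' : Fin k → ℝ} {ξ : Util k}
    {x x' : Alloc k} (hx : Feasible S b ξ x) (hx' : Feasible S b' ξ x')
    {θ : ℝ} (hθ0 : 0 ≤ θ) (hθ1 : θ ≤ 1) :
    Feasible S (fun i => θ * b i + (1 - θ) * b' i) ξ
      (fun w j => θ * x w j + (1 - θ) * x' w j) := by
  obtain ⟨h01, hsum, hmono, hbal⟩ := hx
  obtain ⟨h01', hsum', hmono', hbal'⟩ := hx'
  refine ⟨?_, ?_, ?_, ?_⟩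
  · intro v hv i
    have a := h01 v hv i
    have c := h01' v hv i
    constructor
    · show (0:ℝ) ≤ θ * x v i + (1 - θ) * x' v i
      nlinarith [a.1, c.1]
    · show θ * x v i + (1 - θ) * x' v i ≤ 1
      nlinarith [a.2, c.2]
  · intro v hv
    have a := hsum v hv
    have c := hsum' v hv
    show ∑ i, (θ * x v i + (1 - θ) * x' v i) ≤ 1
    calc ∑ i, (θ * x v i + (1 - θ) * x' v i)
        = θ * ∑ i, x v i + (1 - θ) * ∑ i, x' v i := by
          rw [Finset.mul_sum, Finset.mul_sum, ← Finset.sum_add_distrib]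
      _ ≤ 1 := by nlinarith
  · intro i v hv s hs s' hs' hss'
    have a := hmono i v hv s hs s' hs' hss'
    have c := hmono' i v hv s hs s' hs' hss'
    have h1θ : 0 ≤ 1 - θ := by linarith
    show θ * x (Function.update v i s) i + (1 - θ) * x' (Function.update v i s) i
      ≤ θ * x (Function.update v i s') i + (1 - θ) * x' (Function.update v i s') i
    nlinarith
  · intro i v hv
    have a := hbal i v hv
    have c := hbal' i v hv
    show envUbar S (fun w j => θ * x w j + (1 - θ) * x' w j) i v
      ≤ θ * b i + (1 - θ) * b' i + ξ i v
    rw [envUbar_combine]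
    nlinarith

lemma obj_combine {S : Setting k} {g : (Fin k → ℝ) → ℝ} (hg : ConcaveOn ℝ Set.univ g)
    {b b' : Fin k → ℝ} {ξ : Util k} {x x' : Alloc k}
    {θ : ℝ} (hθ0 : 0 ≤ θ) (hθ1 : θ ≤ 1) :
    θ * obj S g b ξ x + (1 - θ) * obj S g b' ξ x'
      ≤ obj S g (fun i => θ * b i + (1 - θ) * b' i) ξ
          (fun w j => θ * x w j + (1 - θ) * x' w j) := by
  unfold obj
  rw [Finset.mul_sum, Finset.mul_sum, ← Finset.sum_add_distrib]
  apply Finset.sum_le_sum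
  intro v hv
  have hp := prob_nonneg hv
  have h1 : ∑ i, (v i * (θ * x v i + (1 - θ) * x' v i) - ξ i v)
      = θ * (∑ i, (v i * x v i - ξ i v)) + (1 - θ) * (∑ i, (v i * x' v i - ξ i v)) := by
    rw [Finset.mul_sum, Finset.mul_sum, ← Finset.sum_add_distrib]
    exact Finset.sum_congr rfl fun i _ => by ring
  have h2 : θ * g (fun i => deltaB S x ξ v i + b i)
        + (1 - θ) * g (fun i => deltaB S x' ξ v i + b' i)
      ≤ g (fun i => deltaB S (fun w j => θ * x w j + (1 - θ) * x' w j) ξ v i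
            + (θ * b i + (1 - θ) * b' i)) := by
    have harg : (fun i => deltaB S (fun w j => θ * x w j + (1 - θ) * x' w j) ξ v i
            + (θ * b i + (1 - θ) * b' i))
        = θ • (fun i => deltaB S x ξ v i + b i)
            + (1 - θ) • (fun i => deltaB S x' ξ v i + b' i) := by
      funext i
      simp only [Pi.add_apply, Pi.smul_apply, smul_eq_mul, deltaB_combine]
      ring
    rw [harg]
    have h1θ0 : (0:ℝ) ≤ 1 - θ := by linarith
    have hsum1 : θ + (1 - θ) = 1 := by ring
    have := hg.2 (Set.mem_univ (fun i => deltaB S x ξ v i + b i))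
      (Set.mem_univ (fun i => deltaB S x' ξ v i + b' i)) hθ0 h1θ0 hsum1
    simpa using this
  nlinarith [h2]

lemma mix_le_csSup {A B C : Set ℝ} (hA : A.Nonempty) (hB : B.Nonempty)
    {θ : ℝ} (hθ0 : 0 ≤ θ) (hθ1 : θ ≤ 1)
    (key : ∀ a ∈ A, ∀ c ∈ B, θ * a + (1 - θ) * c ≤ sSup C) :
    θ * sSup A + (1 - θ) * sSup B ≤ sSup C := by
  set t := sSup C with ht
  rcases eq_or_lt_of_le hθ0 with h0 | h0
  · obtain ⟨a, ha⟩ := hA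
    subst h0
    have hBle : sSup B ≤ t := csSup_le hB fun c hc => by
      have := key a ha c hc; linarith
    linarith
  rcases eq_or_lt_of_le hθ1 with h1 | h1
  · obtain ⟨c, hc⟩ := hB
    subst h1
    have hAle : sSup A ≤ t := csSup_le hA fun a ha => by
      have := key a ha c hc; linarith
    linarith
  · have h1θ : 0 < 1 - θ := by linarith
    have hB' : ∀ a ∈ A, sSup B ≤ (t - θ * a) / (1 - θ) := by
      intro a ha
      apply csSup_le hB
      intro c hc
      rw [le_div_iff₀ h1θ]
      have := key a ha c hc
      linarith
    have hA' : sSup A ≤ (t - (1 - θ) * sSup B) / θ := by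
      apply csSup_le hA
      intro a ha
      rw [le_div_iff₀ h0]
      have := hB' a ha
      rw [le_div_iff₀ h1θ] at this
      linarith
    have h2 : θ * sSup A ≤ t - (1 - θ) * sSup B := by
      have := mul_le_mul_of_nonneg_left hA' h0.le
      rwa [mul_div_cancel₀ _ h0.ne'] at this
    linarith

/-- For every concave `g : ℝ^k → ℝ` and valid family `ξ`, the optimal
value `b ↦ G(g, b, ξ)` is concave on `(ℝ≥0)^k`. -/
theorem G_concave_in_balance
    (k : ℕ) (hk : 1 ≤ k) (S : Setting k)
    (g : (Fin k → ℝ) → ℝ) (hg : ConcaveOn ℝ Set.univ g)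
    (ξ : Util k) (hξ : ValidXi S ξ)
    (b b' : Fin k → ℝ) (hb : ∀ i, 0 ≤ b i) (hb' : ∀ i, 0 ≤ b' i)
    (θ : ℝ) (hθ0 : 0 ≤ θ) (hθ1 : θ ≤ 1) :
    θ * G S g b ξ + (1 - θ) * G S g b' ξ
      ≤ G S g (fun i => θ * b i + (1 - θ) * b' i) ξ := by
  have hb'' : ∀ i, 0 ≤ θ * b i + (1 - θ) * b' i := by
    intro i; nlinarith [hb i, hb' i]
  have hCbdd := bddAbove_objSet S g hg (fun i => θ * b i + (1 - θ) * b' i) ξ hξ hb''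
  have hAne := nonempty_objSet S g b ξ hξ hb
  have hBne := nonempty_objSet S g b' ξ hξ hb'
  unfold G
  apply mix_le_csSup hAne hBne hθ0 hθ1
  rintro a ⟨x, hx, rfl⟩ c ⟨x', hx', rfl⟩
  have hfeas := feasible_combine hx hx' hθ0 hθ1
  have hobj := obj_combine (S := S) hg (b := b) (b' := b') (ξ := ξ) (x := x) (x' := x') hθ0 hθ1
  exact hobj.trans (le_csSup hCbdd ⟨_, hfeas, rfl⟩)

end SinglePeriod
end
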